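/- For γ > 5/3 and 1 < λ < (3γ - 1)/(√3(γ-1) + 2), the inequality (3γ² - 6γ - 1)(λ-1)² + 6(γ² - 1)(λ-1) - 6(γ-1)² < 0 holds. -/
import Mathlib


theorem stmt_10 (γ lam : ℝ) (hγ : 5 / 3 < γ) (hl1 : 1 < lam)
    (hl2 : lam < (3 * γ - 1) / (Real.sqrt 3 * (γ - 1) + 2)) :
    (3 * γ ^ 2 - 6 * γ - 1) * (lam - 1) ^ 2 + 6 * (γ ^ 2 - 1) * (lam - 1)
      - 6 * (γ - 1) ^ 2 < 0 := by
  set s := Real.sqrt 3 with hsdef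
  have hs : s ^ 2 = 3 := Real.sq_sqrt (by norm_num)
  have hs0 : 0 ≤ s := Real.sqrt_nonneg 3
  have hs1 : 1 < s := by nlinarith
  have hs2 : s < 2 := by nlinarith
  have hu : (0:ℝ) < γ - 1 := by linarith
  have hD : 0 < s * (γ - 1) + 2 := by nlinarith
  have hl2' : lam * (s * (γ - 1) + 2) < 3 * γ - 1 := (lt_div_iff₀ hD).mp hl2
  set t := lam - 1 with htdef
  set D := s * (γ - 1) + 2 with hDdef
  have ht : 0 < t := by simp [htdef]; linarith
  have hF1 : t * D < (γ - 1) * (3 - s) := by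
    have : t * D = lam * D - D := by ring
    rw [this, hDdef]; nlinarith
  have hF2 : 0 < (3 * γ ^ 2 - 6 * γ - 1) * (t * D + (γ - 1) * (3 - s))
      + 6 * (γ ^ 2 - 1) * D := by
    rcases le_or_gt 0 (3 * γ ^ 2 - 6 * γ - 1) with ha | ha
    · have h1 : 0 < t * D + (γ - 1) * (3 - s) := by
        have := mul_pos ht hD
        nlinarith
      have h2 : 0 < 6 * (γ ^ 2 - 1) * D := by nlinarith
      nlinarith [mul_nonneg ha h1.le]
    · -- a < 0 : bound t*D + (γ-1)(3-s) above by 2(γ-1)(3-s)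
      have hb : (3 * γ ^ 2 - 6 * γ - 1) * (t * D + (γ - 1) * (3 - s))
          > (3 * γ ^ 2 - 6 * γ - 1) * (2 * (γ - 1) * (3 - s)) := by
        apply mul_lt_mul_of_neg_left _ ha
        nlinarith
      have hpos : 0 < (3 * γ ^ 2 - 6 * γ - 1) * (2 * (γ - 1) * (3 - s))
          + 6 * (γ ^ 2 - 1) * D := by
        have hexp : (3 * γ ^ 2 - 6 * γ - 1) * (2 * (γ - 1) * (3 - s))
            + 6 * (γ ^ 2 - 1) * D
            = 2 * (γ - 1) * (9 * (γ - 1) ^ 2 + 6 * s * (γ - 1) + 6 * (γ - 1) + 4 * s) := by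
          rw [hDdef]; linear_combination (2 * (γ - 1) ^ 2 * (3 * γ + 1) - 2 * (γ-1) * (3*(γ-1)^2 - 4) - 8 * γ * (γ - 1)) * hs
        rw [hexp]
        have : 0 < 9 * (γ - 1) ^ 2 + 6 * s * (γ - 1) + 6 * (γ - 1) + 4 * s := by nlinarith
        nlinarith
      linarith
  have key : D ^ 2 * ((3 * γ ^ 2 - 6 * γ - 1) * t ^ 2 + 6 * (γ ^ 2 - 1) * t
      - 6 * (γ - 1) ^ 2)
      = (t * D - (γ - 1) * (3 - s)) * ((3 * γ ^ 2 - 6 * γ - 1) * (t * D + (γ - 1) * (3 - s))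
        + 6 * (γ ^ 2 - 1) * D) := by
    rw [hDdef]
    linear_combination (-(γ - 1) ^ 2 * (3 * γ - 1) ^ 2) * hs
  have hneg : D ^ 2 * ((3 * γ ^ 2 - 6 * γ - 1) * t ^ 2 + 6 * (γ ^ 2 - 1) * t
      - 6 * (γ - 1) ^ 2) < 0 := by
    rw [key]
    exact mul_neg_of_neg_of_pos (by linarith) hF2
  have hD2 : 0 < D ^ 2 := by positivity
  nlinarith [hneg, hD2]
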